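/- Let (a,b) and (a′,b′) be pairs of real numbers, each with at least one nonzero entry, and let E, E′ ⊆ ℝ. Suppose the sets e = {(x,p) ∈ ℝ² : ax + bp ∈ E} and e′ = {(x,p) ∈ ℝ² : a′x + b′p ∈ E′} are equal and nonempty. Then either e = ℝ², or there exists a nonzero real number r such that a′ = ra, b′ = rb, and E′ = {rc : c ∈ E}. -/

import Mathlib

private lemma surj_lin {a b : ℝ} (hab : a ≠ 0 ∨ b ≠ 0) (c : ℝ) :
    ∃ q : ℝ × ℝ, a * q.1 + b * q.2 = c := by
  rcases hab with ha | hb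
  · exact ⟨(c / a, 0), by field_simp; ring⟩
  · exact ⟨(0, c / b), by field_simp; ring⟩

/-- Consistency claim for the phase-space observation space: if two events
[ax+bp ∈ E] and [a′x+b′p ∈ E′] coincide and are nonempty, then either they are all of ℝ²,
or (a′,b′) = r·(a,b) and E′ = r·E for some nonzero real r. -/
theorem phase_space_consistency (a b a' b' : ℝ)
    (hab : a ≠ 0 ∨ b ≠ 0) (hab' : a' ≠ 0 ∨ b' ≠ 0) (E E' : Set ℝ)
    (heq : {q : ℝ × ℝ | a * q.1 + b * q.2 ∈ E} = {q : ℝ × ℝ | a' * q.1 + b' * q.2 ∈ E'})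
    (hne : {q : ℝ × ℝ | a * q.1 + b * q.2 ∈ E}.Nonempty) :
    {q : ℝ × ℝ | a * q.1 + b * q.2 ∈ E} = Set.univ ∨
    ∃ r : ℝ, r ≠ 0 ∧ a' = r * a ∧ b' = r * b ∧ E' = (fun c : ℝ => r * c) '' E := by
  by_cases hD : a * b' - a' * b = 0
  · -- dependent case
    right
    obtain ⟨r, hra, hrb, hr⟩ : ∃ r : ℝ, a' = r * a ∧ b' = r * b ∧ r ≠ 0 := by
      rcases hab with ha | hb
      · refine ⟨a' / a, by field_simp, ?_, ?_⟩
        · field_simp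
          nlinarith [hD]
        · intro h
          rw [div_eq_zero_iff] at h
          rcases h with h | h
          · have hab0 : a * b' = 0 := by rw [h] at hD; linarith
            have hb' : b' = 0 := by
              rcases mul_eq_zero.mp hab0 with h2 | h2
              · exact absurd h2 ha
              · exact h2
            rcases hab' with h' | h' <;> [exact h' h; exact h' hb']
          · exact ha h
      · refine ⟨b' / b, ?_, by field_simp, ?_⟩
        · field_simp
          nlinarith [hD]
        · intro h
          rw [div_eq_zero_iff] at h
          rcases h with h | h
          · have hab0 : a' * b = 0 := by rw [h] at hD; linarith
            have ha' : a' = 0 := by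
              rcases mul_eq_zero.mp hab0 with h2 | h2
              · exact h2
              · exact absurd h2 hb
            rcases hab' with h' | h' <;> [exact h' ha'; exact h' h]
          · exact hb h
    refine ⟨r, hr, hra, hrb, ?_⟩
    ext c'
    constructor
    · intro hc'
      obtain ⟨q, hq⟩ := surj_lin hab (c' / r)
      have hq' : a' * q.1 + b' * q.2 = c' := by
        rw [hra, hrb]
        have : r * (a * q.1 + b * q.2) = r * (c' / r) := by rw [hq]
        rw [mul_div_cancel₀ _ hr] at this
        linarith [this]
      have : q ∈ {q : ℝ × ℝ | a' * q.1 + b' * q.2 ∈ E'} := by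
        simp only [Set.mem_setOf_eq, hq']; exact hc'
      rw [← heq] at this
      simp only [Set.mem_setOf_eq, hq] at this
      exact ⟨c' / r, this, by field_simp⟩
    · rintro ⟨c, hc, rfl⟩
      obtain ⟨q, hq⟩ := surj_lin hab c
      have : q ∈ {q : ℝ × ℝ | a * q.1 + b * q.2 ∈ E} := by
        simp only [Set.mem_setOf_eq, hq]; exact hc
      rw [heq] at this
      simp only [Set.mem_setOf_eq, hra, hrb] at this
      have h2 : r * a * q.1 + r * b * q.2 = r * c := by rw [← hq]; ring
      rwa [h2] at this
  · -- independent case: the set is univ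
    left
    obtain ⟨q0, hq0⟩ := hne
    set c0 := a * q0.1 + b * q0.2 with hc0
    have hc0E : c0 ∈ E := hq0
    ext q
    simp only [Set.mem_setOf_eq, Set.mem_univ, iff_true]
    suffices h : q ∈ {q : ℝ × ℝ | a' * q.1 + b' * q.2 ∈ E'} by
      have := heq ▸ h
      exact (Set.ext_iff.mp heq q).mpr h
    set c' := a' * q.1 + b' * q.2 with hc'
    show c' ∈ E'
    set D := a * b' - a' * b with hDdef
    set x := (b' * c0 - b * c') / D with hx
    set p := (a * c' - a' * c0) / D with hp
    have h1 : a * x + b * p = c0 := by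
      rw [hx, hp]; field_simp; ring
    have h2 : a' * x + b' * p = c' := by
      rw [hx, hp]; field_simp; ring
    have hmem : (x, p) ∈ {q : ℝ × ℝ | a * q.1 + b * q.2 ∈ E} := by
      simp only [Set.mem_setOf_eq, h1]; exact hc0E
    rw [heq] at hmem
    simp only [Set.mem_setOf_eq, h2] at hmem
    exact hmem
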